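/- Let n ≥ 1 be an integer, τ > 0 a real number, and s₀ a real number. Then there exists a unique tuple of real numbers (a₀,…,a_{n−1}, b₀,…,b_{n−1}) such that the quasipolynomial Δ(s) = s^n + Σ_{k=0}^{n−1} a_k s^k + e^{−sτ} Σ_{k=0}^{n−1} b_k s^k has s₀ as a root of multiplicity at least 2n, i.e., Δ^{(k)}(s₀) = 0 for all 0 ≤ k ≤ 2n − 1. -/

import Mathlib

open Polynomial

noncomputable def Tend (R : Type*) [CommRing R] (t : R) : Module.End R R[X] :=
  (Polynomial.derivative : R[X] →ₗ[R] R[X]) - t • 1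

lemma Tend_apply {R : Type*} [CommRing R] (t : R) (q : R[X]) :
    Tend R t q = derivative q - t • q := by
  simp [Tend, LinearMap.sub_apply]

lemma Tend_pow_eval {R : Type*} [CommRing R] (t : R) (s₀ : R) (Q : R[X]) (j : ℕ) :
    eval s₀ ((Tend R t ^ j) Q) =
      ∑ i ∈ Finset.range (j + 1),
        (j.choose i : R) * (-t) ^ (j - i) * eval s₀ (derivative^[i] Q) := by
  have hc : Commute (Polynomial.derivative : Module.End R R[X]) ((-t) • 1) :=
    ((Commute.one_right _).smul_right _)
  have hT : Tend R t = (Polynomial.derivative : Module.End R R[X]) + (-t) • 1 := by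
    rw [Tend, sub_eq_add_neg]; rw [show -(t • (1:Module.End R R[X])) = (-t) • 1 from (neg_smul t (1:Module.End R R[X])).symm]
  rw [hT, hc.add_pow]
  simp only [LinearMap.sum_apply, map_sum, eval_finset_sum]
  refine Finset.sum_congr rfl fun i hi => ?_
  rw [_root_.smul_pow, one_pow, Module.End.mul_apply, Module.End.mul_apply]
  simp [Module.End.natCast_apply, LinearMap.smul_apply, Module.End.pow_apply,
    map_smul, eval_smul, smul_eq_mul]
  ring

lemma eval_iterate_derivative_eq (s₀ : ℝ) (Q : ℝ[X]) (i : ℕ) :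
    eval s₀ (derivative^[i] Q) = (i.factorial : ℝ) * (taylor s₀ Q).coeff i := by
  rw [taylor_coeff, ← Polynomial.factorial_smul_hasseDeriv]
  simp [eval_smul, smul_eq_mul]

/-- triangularity: the conditions force `Q = 0`. -/
lemma poly_eq_zero_of_Tend (t s₀ : ℝ) (n : ℕ) (Q : ℝ[X]) (hdeg : Q.natDegree < n)
    (h : ∀ j < n, eval s₀ ((Tend ℝ t ^ j) Q) = 0) : Q = 0 := by
  have key : ∀ j, j < n → (taylor s₀ Q).coeff j = 0 := by
    intro j
    induction j using Nat.strong_induction_on with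
    | _ j IH =>
      intro hj
      have h0 := h j hj
      rw [Tend_pow_eval] at h0
      rw [Finset.sum_range_succ] at h0
      have hz : ∀ i ∈ Finset.range j,
          (j.choose i : ℝ) * (-t) ^ (j - i) * eval s₀ (derivative^[i] Q) = 0 := by
        intro i hi
        rw [Finset.mem_range] at hi
        rw [eval_iterate_derivative_eq, IH i hi (hi.trans hj)]
        ring
      rw [Finset.sum_eq_zero hz, zero_add, eval_iterate_derivative_eq] at h0
      simp only [Nat.choose_self, Nat.cast_one, Nat.sub_self, pow_zero, one_mul] at h0
      have : (j.factorial : ℝ) ≠ 0 := Nat.cast_ne_zero.mpr (Nat.factorial_ne_zero j)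
      have := mul_eq_zero.mp h0
      tauto
  have : taylor s₀ Q = 0 := by
    ext i
    by_cases hi : i < n
    · simpa using key i hi
    · exact Polynomial.coeff_eq_zero_of_natDegree_lt
        (by rw [natDegree_taylor]; omega)
  have := taylor_injective s₀ (by simpa using this : taylor s₀ Q = taylor s₀ 0)
  simpa using this

lemma Tend_injective {t : ℝ} (ht : t ≠ 0) : Function.Injective (Tend ℝ t) := by
  rw [← LinearMap.ker_eq_bot, LinearMap.ker_eq_bot']
  intro q hq
  by_contra hq0
  rw [Tend_apply, sub_eq_zero] at hq
  have hcoeff := congrArg (fun p => Polynomial.coeff p q.natDegree) hq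
  simp only [coeff_derivative, coeff_smul, smul_eq_mul] at hcoeff
  rw [Polynomial.coeff_eq_zero_of_natDegree_lt (lt_add_one _)] at hcoeff
  simp only [zero_mul] at hcoeff
  exact hq0 (Polynomial.leadingCoeff_eq_zero.mp
    (by rw [Polynomial.leadingCoeff]; exact (mul_eq_zero.mp hcoeff.symm).resolve_left ht))

lemma natDegree_Tend_le (t : ℝ) (q : ℝ[X]) : (Tend ℝ t q).natDegree ≤ q.natDegree := by
  rw [Tend_apply]
  refine (Polynomial.natDegree_sub_le _ _).trans ?_
  simp only [max_le_iff]
  exact ⟨(Polynomial.natDegree_derivative_le q).trans (Nat.sub_le _ _),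
    (Polynomial.natDegree_smul_le _ _)⟩

lemma natDegree_Tend_pow_le (t : ℝ) (q : ℝ[X]) (k : ℕ) :
    ((Tend ℝ t ^ k) q).natDegree ≤ q.natDegree := by
  induction k with
  | zero => simp
  | succ k IH =>
    rw [pow_succ', Module.End.mul_apply]
    exact (natDegree_Tend_le _ _).trans IH

open Complex in
lemma expPoly_hasDerivAt (τc : ℂ) (p q : ℂ[X]) (s : ℂ) :
    HasDerivAt (fun s : ℂ => eval s p + Complex.exp (-s * τc) * eval s q)
      (eval s (derivative p) + Complex.exp (-s * τc) * eval s (Tend ℂ τc q)) s := by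
  have h1 : HasDerivAt (fun s : ℂ => eval s p) (eval s (derivative p)) s :=
    Polynomial.hasDerivAt p s
  have h2 : HasDerivAt (fun s : ℂ => -s * τc) (-1 * τc) s :=
    ((hasDerivAt_id s).neg).mul_const τc
  have h3 : HasDerivAt (fun s : ℂ => Complex.exp (-s * τc))
      (Complex.exp (-s * τc) * (-1 * τc)) s := h2.cexp
  have h4 := h3.mul (Polynomial.hasDerivAt q s)
  have h5 := h1.add h4
  refine h5.congr_deriv ?_
  rw [Tend_apply]
  simp only [eval_sub, eval_smul, smul_eq_mul]
  ring

open Complex in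
lemma iteratedDeriv_expPoly (τc : ℂ) (k : ℕ) (p q : ℂ[X]) :
    iteratedDeriv k (fun s : ℂ => eval s p + Complex.exp (-s * τc) * eval s q) =
      fun s : ℂ => eval s (derivative^[k] p) +
        Complex.exp (-s * τc) * eval s ((Tend ℂ τc ^ k) q) := by
  induction k generalizing p q with
  | zero => simp
  | succ k IH =>
    rw [iteratedDeriv_succ']
    have hd : deriv (fun s : ℂ => eval s p + Complex.exp (-s * τc) * eval s q) =
        fun s : ℂ => eval s (derivative p) +
          Complex.exp (-s * τc) * eval s (Tend ℂ τc q) := by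
      funext s
      exact (expPoly_hasDerivAt τc p q s).deriv
    rw [hd, IH]
    funext s
    rw [Function.iterate_succ_apply, pow_succ, Module.End.mul_apply]

lemma Tend_map (t : ℝ) (r : ℝ[X]) :
    (Tend ℝ t r).map Complex.ofRealHom = Tend ℂ (t : ℂ) (r.map Complex.ofRealHom) := by
  rw [Tend_apply, Tend_apply, Polynomial.map_sub, Polynomial.derivative_map,
    Polynomial.smul_eq_C_mul, Polynomial.smul_eq_C_mul, Polynomial.map_mul, Polynomial.map_C]
  simp

lemma Tend_pow_map (t : ℝ) (r : ℝ[X]) (k : ℕ) :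
    ((Tend ℝ t ^ k) r).map Complex.ofRealHom = (Tend ℂ (t : ℂ) ^ k) (r.map Complex.ofRealHom) := by
  induction k generalizing r with
  | zero => simp
  | succ k IH =>
    rw [pow_succ, pow_succ, Module.End.mul_apply, Module.End.mul_apply, ← Tend_map, IH]

lemma iterate_derivative_map' (r : ℝ[X]) (k : ℕ) :
    (derivative^[k] r).map Complex.ofRealHom = derivative^[k] (r.map Complex.ofRealHom) := by
  induction k with
  | zero => simp
  | succ k IH =>
    rw [Function.iterate_succ_apply', Function.iterate_succ_apply', ← IH,
      Polynomial.derivative_map]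

lemma eval_map_ofReal (r : ℝ[X]) (x : ℝ) :
    eval (x : ℂ) (r.map Complex.ofRealHom) = ((eval x r : ℝ) : ℂ) := by
  rw [Polynomial.eval_map]
  exact Polynomial.eval₂_at_apply Complex.ofRealHom x

noncomputable def coeffPoly (n : ℕ) : (Fin n → ℝ) →ₗ[ℝ] ℝ[X] :=
  ∑ i : Fin n, (LinearMap.toSpanSingleton ℝ ℝ[X] ((X : ℝ[X]) ^ (i : ℕ))) ∘ₗ LinearMap.proj i

lemma coeffPoly_apply {n : ℕ} (a : Fin n → ℝ) :
    coeffPoly n a = ∑ i : Fin n, C (a i) * (X : ℝ[X]) ^ (i : ℕ) := by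
  simp [coeffPoly, LinearMap.sum_apply, LinearMap.toSpanSingleton_apply,
    Polynomial.smul_eq_C_mul]

lemma natDegree_coeffPoly_lt {n : ℕ} (hn : 1 ≤ n) (a : Fin n → ℝ) :
    (coeffPoly n a).natDegree < n := by
  rw [coeffPoly_apply]
  have : (∑ i : Fin n, C (a i) * (X : ℝ[X]) ^ (i : ℕ)).natDegree ≤ n - 1 := by
    apply Polynomial.natDegree_sum_le_of_forall_le
    intro i _
    refine (Polynomial.natDegree_C_mul_le _ _).trans ?_
    rw [Polynomial.natDegree_X_pow]
    omega
  omega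

lemma coeff_coeffPoly {n : ℕ} (a : Fin n → ℝ) (i : Fin n) :
    (coeffPoly n a).coeff (i : ℕ) = a i := by
  rw [coeffPoly_apply, Polynomial.finset_sum_coeff]
  rw [Finset.sum_eq_single i]
  · simp
  · intro j _ hj
    simp only [Polynomial.coeff_C_mul, Polynomial.coeff_X_pow]
    rw [if_neg (fun h => hj (Fin.ext h.symm))]
    ring
  · simp

noncomputable def Lmap (n : ℕ) (τ s₀ : ℝ) :
    ((Fin n → ℝ) × (Fin n → ℝ)) →ₗ[ℝ] (Fin (2 * n) → ℝ) :=
  LinearMap.pi fun k =>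
    (Polynomial.leval s₀ ∘ₗ
      (((Polynomial.derivative : Module.End ℝ ℝ[X]) ^ (k : ℕ)) ∘ₗ
        (coeffPoly n ∘ₗ LinearMap.fst ℝ _ _)))
    + Real.exp (-s₀ * τ) • (Polynomial.leval s₀ ∘ₗ
      ((Tend ℝ τ ^ (k : ℕ)) ∘ₗ (coeffPoly n ∘ₗ LinearMap.snd ℝ _ _)))

lemma Lmap_apply (n : ℕ) (τ s₀ : ℝ) (ab : (Fin n → ℝ) × (Fin n → ℝ)) (k : Fin (2 * n)) :
    Lmap n τ s₀ ab k = eval s₀ (derivative^[(k : ℕ)] (coeffPoly n ab.1)) +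
      Real.exp (-s₀ * τ) * eval s₀ ((Tend ℝ τ ^ (k : ℕ)) (coeffPoly n ab.2)) := by
  simp [Lmap, LinearMap.pi_apply, Polynomial.leval_apply, Module.End.pow_apply, smul_eq_mul]

lemma Lmap_injective (n : ℕ) (hn : 1 ≤ n) (τ s₀ : ℝ) (hτ : τ ≠ 0) :
    Function.Injective (Lmap n τ s₀) := by
  rw [← LinearMap.ker_eq_bot, LinearMap.ker_eq_bot']
  intro ab hab
  have hE : Real.exp (-s₀ * τ) ≠ 0 := Real.exp_ne_zero _
  set p := coeffPoly n ab.1 with hp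
  set q := coeffPoly n ab.2 with hq
  have hcomp : ∀ k : Fin (2 * n), eval s₀ (derivative^[(k : ℕ)] p) +
      Real.exp (-s₀ * τ) * eval s₀ ((Tend ℝ τ ^ (k : ℕ)) q) = 0 := by
    intro k
    rw [← Lmap_apply, hab]
    rfl
  have hdp : p.natDegree < n := natDegree_coeffPoly_lt hn ab.1
  have hdq : q.natDegree < n := natDegree_coeffPoly_lt hn ab.2
  -- the high-order conditions kill `q`
  have hQ : ∀ j < n, eval s₀ ((Tend ℝ τ ^ j) ((Tend ℝ τ ^ n) q)) = 0 := by
    intro j hj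
    have hk := hcomp ⟨j + n, by omega⟩
    simp only [Fin.val_mk] at hk
    rw [Polynomial.iterate_derivative_eq_zero (by omega : p.natDegree < j + n)] at hk
    simp only [eval_zero, zero_add] at hk
    have := (mul_eq_zero.mp hk).resolve_left hE
    rwa [pow_add, Module.End.mul_apply] at this
  have hQ0 : (Tend ℝ τ ^ n) q = 0 :=
    poly_eq_zero_of_Tend τ s₀ n _ (lt_of_le_of_lt (natDegree_Tend_pow_le τ q n) hdq) hQ
  have hq0 : q = 0 := by
    have hinj : Function.Injective ⇑(Tend ℝ τ ^ n) := by
      intro x y hxy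
      simp only [Module.End.pow_apply] at hxy
      exact (Tend_injective hτ).iterate n hxy
    exact hinj (by rw [hQ0, map_zero])
  -- the low-order conditions kill `p`
  have hp0 : p = 0 := by
    have hTD : Tend ℝ 0 = (Polynomial.derivative : Module.End ℝ ℝ[X]) := by
      rw [Tend]; simp
    refine poly_eq_zero_of_Tend 0 s₀ n p hdp ?_
    intro j hj
    have hk := hcomp ⟨j, by omega⟩
    simp only [Fin.val_mk] at hk
    rw [hq0, map_zero, eval_zero, mul_zero, add_zero] at hk
    rw [hTD, Module.End.pow_apply]
    exact hk
  -- conclude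
  have h1 : ab.1 = 0 := by
    funext i
    have := coeff_coeffPoly ab.1 i
    rw [← hp, hp0] at this
    simpa using this.symm
  have h2 : ab.2 = 0 := by
    funext i
    have := coeff_coeffPoly ab.2 i
    rw [← hq, hq0] at this
    simpa using this.symm
  exact Prod.ext h1 h2

lemma Lmap_bijective (n : ℕ) (hn : 1 ≤ n) (τ s₀ : ℝ) (hτ : τ ≠ 0) :
    Function.Bijective (Lmap n τ s₀) := by
  have hinj := Lmap_injective n hn τ s₀ hτ
  refine ⟨hinj, ?_⟩
  have hfr : Module.finrank ℝ ((Fin n → ℝ) × (Fin n → ℝ)) =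
      Module.finrank ℝ (Fin (2 * n) → ℝ) := by
    rw [Module.finrank_prod, Module.finrank_pi, Module.finrank_pi]
    simp [two_mul]
  exact (LinearMap.injective_iff_surjective_of_finrank_eq_finrank hfr).mp hinj

lemma cond_eq (n : ℕ) (τ s₀ : ℝ) (ab : (Fin n → ℝ) × (Fin n → ℝ)) (k : ℕ) :
    iteratedDeriv k
        (fun s : ℂ => s ^ n + (∑ i : Fin n, (ab.1 i : ℂ) * s ^ (i : ℕ)) +
          Complex.exp (-s * τ) * ∑ i : Fin n, (ab.2 i : ℂ) * s ^ (i : ℕ)) (s₀ : ℂ) =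
      ((eval s₀ (derivative^[k] ((X : ℝ[X]) ^ n + coeffPoly n ab.1)) +
        Real.exp (-s₀ * τ) * eval s₀ ((Tend ℝ τ ^ k) (coeffPoly n ab.2)) : ℝ) : ℂ) := by
  have hfun : (fun s : ℂ => s ^ n + (∑ i : Fin n, (ab.1 i : ℂ) * s ^ (i : ℕ)) +
      Complex.exp (-s * τ) * ∑ i : Fin n, (ab.2 i : ℂ) * s ^ (i : ℕ)) =
      fun s : ℂ => eval s ((((X : ℝ[X]) ^ n + coeffPoly n ab.1)).map Complex.ofRealHom) +
        Complex.exp (-s * (τ : ℂ)) * eval s ((coeffPoly n ab.2).map Complex.ofRealHom) := by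
    funext s
    simp [coeffPoly_apply, Polynomial.map_add, Polynomial.map_pow, Polynomial.map_sum,
      Polynomial.map_mul, Polynomial.map_C, eval_finset_sum]
  rw [hfun, iteratedDeriv_expPoly]
  simp only [← iterate_derivative_map', ← Tend_pow_map, eval_map_ofReal]
  have : Complex.exp (-(s₀ : ℂ) * (τ : ℂ)) = ((Real.exp (-s₀ * τ) : ℝ) : ℂ) := by
    rw [Complex.ofReal_exp]
    push_cast
    ring_nf
  rw [this]
  push_cast
  ring


/-- Generic MID setting with `m = n - 1`: for a given `τ > 0` and `s₀ ∈ ℝ`,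
there is a unique tuple of real coefficients `(a₀, …, a_{n-1}, b₀, …, b_{n-1})`
such that `Δ(s) = s^n + Σ_{k<n} a_k s^k + e^{-sτ} Σ_{k<n} b_k s^k` has `s₀` as
a root of multiplicity at least `2n`, i.e. `Δ^{(k)}(s₀) = 0` for all
`0 ≤ k ≤ 2n - 1`. -/
theorem exists_unique_coeffs_max_multiplicity (n : ℕ) (hn : 1 ≤ n) (τ : ℝ)
    (hτ : 0 < τ) (s₀ : ℝ) :
    ∃! ab : (Fin n → ℝ) × (Fin n → ℝ), ∀ k < 2 * n,
      iteratedDeriv k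
        (fun s : ℂ => s ^ n + (∑ k : Fin n, (ab.1 k : ℂ) * s ^ (k : ℕ)) +
          Complex.exp (-s * τ) * ∑ k : Fin n, (ab.2 k : ℂ) * s ^ (k : ℕ))
        (s₀ : ℂ) = 0 := by
  set t : Fin (2 * n) → ℝ :=
    fun k => -(eval s₀ (derivative^[(k : ℕ)] ((X : ℝ[X]) ^ n))) with ht
  have hsplit : ∀ (r : ℝ[X]) (k : ℕ),
      derivative^[k] ((X : ℝ[X]) ^ n + r) =
        derivative^[k] ((X : ℝ[X]) ^ n) + derivative^[k] r := by
    intro r k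
    simp only [← Module.End.pow_apply, map_add]
  have hiff : ∀ ab : (Fin n → ℝ) × (Fin n → ℝ),
      (∀ k < 2 * n, iteratedDeriv k
        (fun s : ℂ => s ^ n + (∑ k : Fin n, (ab.1 k : ℂ) * s ^ (k : ℕ)) +
          Complex.exp (-s * τ) * ∑ k : Fin n, (ab.2 k : ℂ) * s ^ (k : ℕ))
        (s₀ : ℂ) = 0) ↔ Lmap n τ s₀ ab = t := by
    intro ab
    constructor
    · intro h
      funext k
      have hk := h (k : ℕ) k.isLt
      rw [cond_eq, Complex.ofReal_eq_zero] at hk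
      rw [hsplit, eval_add] at hk
      rw [Lmap_apply, ht]
      beta_reduce
      linarith
    · intro h k hk
      have hk' := congrFun h (⟨k, hk⟩ : Fin (2 * n))
      rw [Lmap_apply, ht] at hk'
      beta_reduce at hk'
      simp only [Fin.val_mk] at hk'
      rw [cond_eq, Complex.ofReal_eq_zero, hsplit, eval_add]
      linarith
  have hbij := Lmap_bijective n hn τ s₀ (ne_of_gt hτ)
  obtain ⟨x, hx⟩ := hbij.2 t
  exact ⟨x, (hiff x).mpr hx, fun y hy => hbij.1 (by rw [hx, (hiff y).mp hy])⟩
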